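/- For every integer i ≥ 0 and every integer N ≥ 1, the combinatorial identity ∑_{k=0}^{i} (-1)^{i-k} · binom(N-1,k) · binom(N-k-2, i-k) · (k+1)^i = N^i holds, where binom(m,j) = 0 when 0 ≤ m < j. -/

import Mathlib

open Finset
noncomputable def S (i j : ℕ) (a : ℤ) : ℤ :=
  ∑ k ∈ Finset.range (j + 1), (-1 : ℤ) ^ k * (j.choose k) * ((k : ℤ) + a) ^ i

lemma S_succ (i j : ℕ) (a : ℤ) : S i (j + 1) a = S i j a - S i j (a + 1) := by
  unfold S
  rw [Finset.sum_range_succ' (fun k => (-1 : ℤ) ^ k * ((j+1).choose k) * ((k : ℤ) + a) ^ i) (j+1),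
      Finset.sum_range_succ' (fun k => (-1 : ℤ) ^ k * (j.choose k) * ((k : ℤ) + a) ^ i) j,
      Finset.sum_range_succ (fun k => (-1 : ℤ) ^ k * (j.choose k) * ((k : ℤ) + (a+1)) ^ i) j]
  simp only [Nat.choose_succ_succ j, Nat.cast_add, Nat.choose_zero_right]
  rw [Finset.sum_range_succ]
  simp only [Nat.choose_succ_self, Nat.cast_zero]
  have hs : ∑ x ∈ Finset.range j,
        (-1:ℤ)^(x+1) * ((j.choose x : ℤ) + (j.choose x.succ : ℤ)) * ((x:ℤ) + 1 + a)^i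
      = ∑ x ∈ Finset.range j, (-1:ℤ)^(x+1) * (j.choose (x+1)) * ((x:ℤ) + 1 + a)^i
        - ∑ x ∈ Finset.range j, (-1:ℤ)^x * (j.choose x) * ((x:ℤ) + (a+1))^i := by
    rw [← Finset.sum_sub_distrib]
    refine Finset.sum_congr rfl fun x _ => ?_
    push_cast [Nat.succ_eq_add_one]
    ring
  push_cast
  linear_combination hs

lemma partial_alt_sum (A : ℕ) (hA : 1 ≤ A) : ∀ s : ℕ,
    ∑ t ∈ Finset.range (s + 1), (-1 : ℤ) ^ t * (A.choose t) =
      (-1 : ℤ) ^ s * ((A - 1).choose s) := by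
  obtain ⟨B, rfl⟩ := Nat.exists_eq_add_of_le hA
  intro s
  induction s with
  | zero => simp
  | succ s ih =>
    rw [Finset.sum_range_succ, ih]
    have h : (1 + B).choose (s + 1) = B.choose s + B.choose (s + 1) := by
      rw [Nat.add_comm 1 B, Nat.choose_succ_succ]
    simp only [Nat.add_sub_cancel_left] at *
    rw [h]
    push_cast
    ring

lemma S_absorb (i j : ℕ) (a : ℤ) :
    S (i+1) (j+1) a = -((j:ℤ)+1) * S i j (a+1) + a * S i (j+1) a := by
  unfold S
  rw [Finset.sum_range_succ' (fun k => (-1:ℤ)^k * (((j+1).choose k : ℕ) : ℤ) * ((k:ℤ)+a)^(i+1)) (j+1),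
      Finset.sum_range_succ' (fun k => (-1:ℤ)^k * (((j+1).choose k : ℕ) : ℤ) * ((k:ℤ)+a)^i) (j+1),
      Finset.mul_sum, mul_add, Finset.mul_sum]
  have key : ∀ x ∈ Finset.range (j+1),
      (-1:ℤ)^(x+1) * (((j+1).choose (x+1) : ℕ) : ℤ) * (((x+1:ℕ):ℤ)+a)^(i+1)
      = -((j:ℤ)+1) * ((-1:ℤ)^x * ((j.choose x : ℕ) : ℤ) * ((x:ℤ)+(a+1))^i)
        + a * ((-1:ℤ)^(x+1) * (((j+1).choose (x+1) : ℕ):ℤ) * (((x+1:ℕ):ℤ)+a)^i) := by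
    intro x _
    have hk : (((j+1).choose (x+1) : ℕ) : ℤ) * ((x:ℤ)+1) = ((j:ℤ)+1) * ((j.choose x : ℕ) : ℤ) := by
      have := (Nat.add_one_mul_choose_eq j x).symm
      exact_mod_cast this
    push_cast
    linear_combination ((-1:ℤ)^(x+1) * ((x:ℤ)+1+a)^i) * hk
  rw [Finset.sum_congr rfl key, Finset.sum_add_distrib, ← Finset.mul_sum, ← Finset.mul_sum]
  push_cast
  ring

lemma S_vanish : ∀ (i j : ℕ), i < j → ∀ (a : ℤ), S i j a = 0 := by
  intro i
  induction i with
  | zero =>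
    intro j hj a
    unfold S
    have h : ∀ k ∈ Finset.range (j+1),
        (-1:ℤ)^k * (j.choose k) * ((k:ℤ)+a)^0 = (-1:ℤ)^k * (j.choose k) := by
      intro k _; simp
    rw [Finset.sum_congr rfl h, Int.alternating_sum_range_choose, if_neg (by omega)]
  | succ i ih =>
    intro j hj a
    obtain ⟨j', rfl⟩ : ∃ j', j = j'+1 := ⟨j-1, by omega⟩
    rw [S_absorb, ih j' (by omega) (a+1), ih (j'+1) (by omega) a]
    ring

lemma newton (i : ℕ) : ∀ (M : ℕ) (a : ℤ),
    ∑ j ∈ Finset.range (i+1), (M.choose j : ℤ) * (-1)^j * S i j a = ((M:ℤ) + a)^i := by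
  intro M
  induction M with
  | zero =>
    intro a
    rw [Finset.sum_eq_single 0]
    · simp [S]
    · intro b _ hb
      obtain ⟨b', rfl⟩ : ∃ b', b = b'+1 := ⟨b-1, by omega⟩
      simp [Nat.choose_zero_succ]
    · intro h; exact absurd (Finset.mem_range.mpr (by omega)) h
  | succ M ih =>
    intro a
    have h1 : ∀ j ∈ Finset.range i, (((M+1).choose (j+1) : ℕ) : ℤ) * (-1)^(j+1) * S i (j+1) a
        = ((M.choose (j+1) : ℕ) : ℤ) * (-1)^(j+1) * S i (j+1) a
          + (((M.choose j : ℕ) : ℤ) * (-1)^j * S i j (a+1)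
            - ((M.choose j : ℕ):ℤ) * (-1)^j * S i j a) := by
      intro j _
      rw [Nat.choose_succ_succ, S_succ]
      push_cast
      ring
    rw [Finset.sum_range_succ' (fun j => (((M+1).choose j : ℕ) : ℤ) * (-1)^j * S i j a) i,
        Finset.sum_congr rfl h1, Finset.sum_add_distrib, Finset.sum_sub_distrib]
    have e1 : (∑ j ∈ Finset.range i, ((M.choose (j+1) : ℕ) : ℤ) * (-1)^(j+1) * S i (j+1) a)
        + (((M+1).choose 0 : ℕ) : ℤ) * (-1)^0 * S i 0 a = ((M:ℤ) + a)^i := by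
      have h0 : (((M+1).choose 0 : ℕ) : ℤ) * (-1:ℤ)^0 * S i 0 a
          = ((M.choose 0 : ℕ) : ℤ) * (-1:ℤ)^(0:ℕ) * S i 0 a := by norm_num
      rw [h0, ← Finset.sum_range_succ' (fun j => ((M.choose j : ℕ) : ℤ) * (-1)^j * S i j a) i]
      exact ih a
    have e2 : ∑ j ∈ Finset.range i, ((M.choose j : ℕ) : ℤ) * (-1)^j * S i j (a+1)
        = ((M:ℤ) + (a+1))^i - ((M.choose i : ℕ) : ℤ) * (-1)^i * S i i (a+1) := by
      have h := ih (a+1)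
      rw [Finset.sum_range_succ] at h
      linarith
    have e3 : ∑ j ∈ Finset.range i, ((M.choose j : ℕ) : ℤ) * (-1)^j * S i j a
        = ((M:ℤ) + a)^i - ((M.choose i : ℕ) : ℤ) * (-1)^i * S i i a := by
      have h := ih a
      rw [Finset.sum_range_succ] at h
      linarith
    have e4 : S i i (a+1) - S i i a = 0 := by
      have h := S_succ i i a
      have h0 : S i (i+1) a = 0 := S_vanish i (i+1) (by omega) a
      linarith
    push_cast
    linear_combination e1 + e2 - e3 - (((M.choose i : ℕ) : ℤ) * (-1:ℤ)^i) * e4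

lemma bridge (i M : ℕ) (hM : i + 1 ≤ M) :
    ∑ k ∈ Finset.range (i+1),
      (-1:ℤ)^(i-k) * (M.choose k) * (((M-1-k).choose (i-k) : ℕ) : ℤ) * ((k:ℤ)+1)^i
      = ((M:ℤ)+1)^i := by
  have hP := newton i M 1
  have ext : ∀ j ∈ Finset.range (i+1), ((M.choose j : ℕ) : ℤ) * (-1)^j * S i j 1
      = ∑ k ∈ Finset.range (i+1),
          ((M.choose j : ℕ) : ℤ) * (-1)^j * ((-1:ℤ)^k * (j.choose k) * ((k:ℤ)+1)^i) := by
    intro j hj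
    unfold S
    rw [Finset.mul_sum]
    apply Finset.sum_subset
    · exact Finset.range_subset_range.mpr (by simp at hj; omega)
    · intro k _ hk
      simp only [Finset.mem_range, not_lt] at hk
      rw [show j.choose k = 0 from Nat.choose_eq_zero_of_lt (by omega)]
      simp
  rw [Finset.sum_congr rfl ext, Finset.sum_comm] at hP
  rw [← hP]
  apply Finset.sum_congr rfl
  intro k hk
  simp only [Finset.mem_range] at hk
  have hki : k ≤ i := by omega
  -- inner sum over j
  have split : ∑ j ∈ Finset.range (i+1),
      ((M.choose j : ℕ) : ℤ) * (-1)^j * ((-1:ℤ)^k * (j.choose k) * ((k:ℤ)+1)^i)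
      = ∑ j ∈ Finset.Ico k (i+1),
      ((M.choose j : ℕ) : ℤ) * (-1)^j * ((-1:ℤ)^k * (j.choose k) * ((k:ℤ)+1)^i) := by
    rw [Finset.range_eq_Ico, ← Finset.sum_Ico_consecutive _ (Nat.zero_le k) (by omega)]
    have hz : ∑ j ∈ Finset.Ico 0 k,
        ((M.choose j : ℕ) : ℤ) * (-1)^j * ((-1:ℤ)^k * (j.choose k) * ((k:ℤ)+1)^i) = 0 := by
      apply Finset.sum_eq_zero
      intro j hj
      simp only [Finset.mem_Ico] at hj
      rw [show j.choose k = 0 from Nat.choose_eq_zero_of_lt (by omega)]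
      simp
    rw [hz, zero_add]
  rw [split, Finset.sum_Ico_eq_sum_range]
  have hrange : i + 1 - k = (i - k) + 1 := by omega
  rw [hrange]
  have term : ∀ t ∈ Finset.range ((i-k)+1),
      ((M.choose (k+t) : ℕ) : ℤ) * (-1)^(k+t) * ((-1:ℤ)^k * ((k+t).choose k) * ((k:ℤ)+1)^i)
      = ((M.choose k : ℕ) : ℤ) * ((k:ℤ)+1)^i * ((-1:ℤ)^t * ((M-k).choose t)) := by
    intro t ht
    simp only [Finset.mem_range] at ht
    have hc : M.choose (k+t) * (k+t).choose k = M.choose k * (M-k).choose t := by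
      have := Nat.choose_mul (n := M) (show k ≤ k + t by omega)
      simpa using this
    have hc' : ((M.choose (k+t) : ℕ) : ℤ) * (((k+t).choose k : ℕ) : ℤ)
        = ((M.choose k : ℕ) : ℤ) * (((M-k).choose t : ℕ) : ℤ) := by exact_mod_cast hc
    have hsign : (-1:ℤ)^(k+t) * (-1:ℤ)^k = (-1:ℤ)^t := by
      rw [← pow_add]; rw [show k + t + k = t + 2*k by omega, pow_add]
      simp [pow_mul]
    push_cast at hc' ⊢
    linear_combination ((-1:ℤ)^(k+t) * (-1:ℤ)^k * ((k:ℤ)+1)^i) * hc'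
      + (((M.choose k : ℕ) : ℤ) * (((M-k).choose t : ℕ):ℤ) * ((k:ℤ)+1)^i) * hsign
  rw [Finset.sum_congr rfl term, ← Finset.mul_sum, partial_alt_sum (M-k) (by omega) (i-k)]
  have : M - k - 1 = M - 1 - k := by omega
  rw [this]
  ring

lemma ringChoose_neg_one (n : ℕ) : Ring.choose (-1 : ℤ) n = (-1)^n := by
  induction n with
  | zero => simp [Ring.choose_zero_right]
  | succ n ih =>
    have h := Ring.choose_succ_succ (-1 : ℤ) n
    rw [neg_add_cancel, Ring.choose_zero_succ, ih] at h
    rw [pow_succ]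
    linarith

theorem abelian_expectation_coefficient_identity (i N : ℕ) (hN : 1 ≤ N) :
    ∑ k ∈ Finset.range (i + 1),
      (-1 : ℤ) ^ (i - k) * ((N - 1).choose k) *
        Ring.choose ((N : ℤ) - k - 2) (i - k) * ((k : ℤ) + 1) ^ i = (N : ℤ) ^ i := by
  rcases le_or_gt N (i + 1) with hle | hlt
  · -- small N : single surviving term at k = N - 1
    rw [Finset.sum_eq_single (N - 1)]
    · have h1 : ((N:ℤ) - (N-1 : ℕ) - 2) = -1 := by
        have : ((N-1 : ℕ) : ℤ) = (N:ℤ) - 1 := by omega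
        rw [this]; ring
      rw [h1, Nat.choose_self, ringChoose_neg_one]
      have h2 : (((N-1 : ℕ) : ℤ) + 1) = (N:ℤ) := by omega
      rw [h2]
      rw [show (-1:ℤ)^(i-(N-1)) * (1:ℕ) * (-1:ℤ)^(i-(N-1)) * (N:ℤ)^i
          = ((-1:ℤ)^(i-(N-1)))^2 * (N:ℤ)^i by push_cast; ring]
      rw [← pow_mul, mul_comm (i-(N-1)) 2, pow_mul]
      norm_num
    · intro k hk hne
      simp only [Finset.mem_range] at hk
      rcases le_or_gt N k with h | h
      · rw [show (N-1).choose k = 0 from Nat.choose_eq_zero_of_lt (by omega)]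
        simp
      · -- k ≤ N - 1, k ≠ N - 1 so k ≤ N - 2
        have hk2 : k + 2 ≤ N := by omega
        have hcast : ((N:ℤ) - k - 2) = ((N - 2 - k : ℕ) : ℤ) := by omega
        rw [hcast, Ring.choose_natCast]
        rw [show (N-2-k).choose (i-k) = 0 from Nat.choose_eq_zero_of_lt (by omega)]
        simp
    · intro h
      exact absurd (Finset.mem_range.mpr (by omega)) h
  · -- large N : everything is a Nat binomial
    have key := bridge i (N-1) (by omega)
    have hterm : ∀ k ∈ Finset.range (i+1),
        (-1 : ℤ) ^ (i - k) * ((N - 1).choose k) *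
          Ring.choose ((N : ℤ) - k - 2) (i - k) * ((k : ℤ) + 1) ^ i
        = (-1:ℤ)^(i-k) * ((N-1).choose k) * (((N-1-1-k).choose (i-k) : ℕ) : ℤ) * ((k:ℤ)+1)^i := by
      intro k hk
      simp only [Finset.mem_range] at hk
      have hcast : ((N:ℤ) - k - 2) = ((N - 1 - 1 - k : ℕ) : ℤ) := by omega
      rw [hcast, Ring.choose_natCast]
    rw [Finset.sum_congr rfl hterm, key]
    have : ((N-1 : ℕ) : ℤ) + 1 = (N:ℤ) := by omega
    rw [this]
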